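/- There exists a ring homomorphism Ψ from the Bohl algebra B to the ring of functions ℝ → ℂ (with pointwise operations) such that for every k ∈ ℕ, every c ∈ ℂ and every λ ∈ ℂ, Ψ maps the function t ↦ c · t^k · exp(λ·t) to the function t ↦ c · exp(i·Im(λ)·t). In particular Ψ takes values in the set of generalized trigonometric polynomials, and Ψ(1) = 1. -/

import Mathlib

open Complex

noncomputable section

/-- The Bohl algebra: the subalgebra of functions `ℝ → ℂ` (pointwise operations)
spanned over `ℂ` by the functions `t ↦ t^k * exp (λ * t)`, `k ∈ ℕ`, `λ ∈ ℂ`. -/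
def Bohl : Subalgebra ℂ (ℝ → ℂ) :=
  Algebra.adjoin ℂ
    {g : ℝ → ℂ | ∃ (k : ℕ) (l : ℂ), g = fun t : ℝ => (t : ℂ) ^ k * Complex.exp (l * t)}

/-- A generalized trigonometric polynomial: `t ↦ ∑ aⱼ exp(i λⱼ t)` with `aⱼ ∈ ℂ`, `λⱼ ∈ ℝ`. -/
def IsTrigPoly (f : ℝ → ℂ) : Prop :=
  ∃ (N : ℕ) (a : Fin N → ℂ) (l : Fin N → ℝ),
    f = fun t : ℝ => ∑ j, a j * Complex.exp (Complex.I * (l j : ℂ) * (t : ℂ))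

section Aux

open Polynomial

lemma hasDerivAt_polyexp (P : ℂ[X]) (l : ℂ) (t : ℝ) :
    HasDerivAt (fun t : ℝ => P.eval (t : ℂ) * Complex.exp (l * t))
      ((P.derivative.eval (t : ℂ) + l * P.eval (t : ℂ)) * Complex.exp (l * t)) t := by
  have h1 : HasDerivAt (fun z : ℂ => P.eval z * Complex.exp (l * z))
      (P.derivative.eval (t : ℂ) * Complex.exp (l * t)
        + P.eval (t : ℂ) * (Complex.exp (l * (t : ℂ)) * (l * 1))) (t : ℂ) :=
    (P.hasDerivAt _).mul (((hasDerivAt_id (t : ℂ)).const_mul l).cexp)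
  have := h1.comp_ofReal
  convert this using 1
  ring

/-- One application of the operator `f ↦ f' - l₀ f` at the level of polynomial data. -/
lemma step_lemma (s : Finset ℂ) (P : ℂ → ℂ[X]) (l₀ : ℂ)
    (h : ∀ t : ℝ, ∑ l ∈ s, (P l).eval (t : ℂ) * Complex.exp (l * t) = 0) :
    ∀ t : ℝ, ∑ l ∈ s,
      ((P l).derivative + C (l - l₀) * P l).eval (t : ℂ) * Complex.exp (l * t) = 0 := by
  intro t
  have hd : HasDerivAt (fun t : ℝ => ∑ l ∈ s, (P l).eval (t : ℂ) * Complex.exp (l * t))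
      (∑ l ∈ s, ((P l).derivative.eval (t : ℂ) + l * (P l).eval (t : ℂ)) * Complex.exp (l * t))
      t := HasDerivAt.fun_sum fun l _ => hasDerivAt_polyexp (P l) l t
  have hfun : (fun t : ℝ => ∑ l ∈ s, (P l).eval (t : ℂ) * Complex.exp (l * t))
      = fun _ => (0 : ℂ) := funext h
  rw [hfun] at hd
  have hD : (∑ l ∈ s, ((P l).derivative.eval (t : ℂ) + l * (P l).eval (t : ℂ))
      * Complex.exp (l * t)) = 0 := by
    have := (hasDerivAt_const t (0 : ℂ)).unique hd
    exact this.symm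
  calc ∑ l ∈ s, ((P l).derivative + C (l - l₀) * P l).eval (t : ℂ) * Complex.exp (l * t)
      = (∑ l ∈ s, ((P l).derivative.eval (t : ℂ) + l * (P l).eval (t : ℂ))
          * Complex.exp (l * t)) - l₀ * ∑ l ∈ s, (P l).eval (t : ℂ) * Complex.exp (l * t) := by
        rw [Finset.mul_sum, ← Finset.sum_sub_distrib]
        refine Finset.sum_congr rfl fun l _ => ?_
        simp only [eval_add, eval_mul, eval_C]
        ring
    _ = 0 := by rw [h t, hD]; ring

/-- Injectivity of `Q ↦ Q' + c Q` for `c ≠ 0`. -/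
lemma L_inj {c : ℂ} (hc : c ≠ 0) {Q : ℂ[X]} (h : Q.derivative + C c * Q = 0) : Q = 0 := by
  by_contra hQ
  have hco : (Q.derivative + C c * Q).coeff Q.natDegree = c * Q.leadingCoeff := by
    rw [coeff_add, coeff_C_mul, coeff_derivative]
    have : Q.coeff (Q.natDegree + 1) = 0 :=
      coeff_eq_zero_of_natDegree_lt (Nat.lt_succ_self _)
    rw [this, leadingCoeff]
    ring
  rw [h, coeff_zero] at hco
  exact hc (by
    have := hco.symm
    rcases mul_eq_zero.mp this with h1 | h1
    · exact h1
    · exact absurd (leadingCoeff_eq_zero.mp h1) hQ)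

/-- The polynomial-level operator. -/
def Lop (c : ℂ) : ℂ[X] → ℂ[X] := fun Q => Q.derivative + C c * Q

def opP (l₀ : ℂ) (P : ℂ → ℂ[X]) : ℂ → ℂ[X] := fun l => Lop (l - l₀) (P l)

lemma Lop_iter_inj {c : ℂ} (hc : c ≠ 0) (m : ℕ) {Q : ℂ[X]} (h : (Lop c)^[m] Q = 0) : Q = 0 := by
  induction m generalizing Q with
  | zero => simpa using h
  | succ n ih =>
    rw [Function.iterate_succ_apply'] at h
    exact ih (L_inj hc (by simpa [Lop] using h))

lemma opP_iter_apply (l₀ : ℂ) (P : ℂ → ℂ[X]) (m : ℕ) (l : ℂ) :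
    ((opP l₀)^[m] P) l = (Lop (l - l₀))^[m] (P l) := by
  induction m generalizing P with
  | zero => rfl
  | succ n ih => rw [Function.iterate_succ_apply, Function.iterate_succ_apply, ih]; rfl

lemma Lop_zero_eq_derivative : Lop 0 = fun Q : ℂ[X] => Q.derivative := by
  funext Q; simp [Lop]

lemma keyA : ∀ (n : ℕ) (s : Finset ℂ), s.card = n → ∀ P : ℂ → ℂ[X],
    (∀ t : ℝ, ∑ l ∈ s, (P l).eval (t : ℂ) * Complex.exp (l * t) = 0) →
    ∀ l ∈ s, P l = 0 := by
  intro n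
  induction n with
  | zero =>
    intro s hs P _ l hl
    rw [Finset.card_eq_zero] at hs
    simp [hs] at hl
  | succ n ih =>
    intro s hs P hsum l hl
    -- pick l₀ := l itself is not great; we prove all-at-once by picking any l₀ and showing
    -- first every other vanishes, then l₀.
    -- Strategy: pick l₀ := l? We need `P l = 0` for the given l; choose l₀ := l.
    set l₀ := l with hl₀
    set m := (P l₀).natDegree + 1 with hm
    set Pm := (opP l₀)^[m] P with hPm
    have hiter : ∀ j : ℕ, ∀ t : ℝ,
        ∑ lam ∈ s, (((opP l₀)^[j] P) lam).eval (t : ℂ) * Complex.exp (lam * t) = 0 := by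
      intro j
      induction j with
      | zero => simpa using hsum
      | succ j ihj =>
        intro t
        rw [Function.iterate_succ_apply']
        exact step_lemma s _ l₀ ihj t
    have hsum' : ∀ t : ℝ, ∑ lam ∈ s, (Pm lam).eval (t : ℂ) * Complex.exp (lam * t) = 0 :=
      hiter m
    have hPml₀ : Pm l₀ = 0 := by
      rw [hPm, opP_iter_apply]
      simp only [sub_self, Lop_zero_eq_derivative]
      exact Polynomial.iterate_derivative_eq_zero (by omega)
    -- sum over s.erase l₀
    have herase : ∀ t : ℝ, ∑ lam ∈ s.erase l₀, (Pm lam).eval (t : ℂ) * Complex.exp (lam * t)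
        = 0 := by
      intro t
      have := hsum' t
      rw [← Finset.add_sum_erase s _ hl] at this
      rw [hPml₀] at this
      simpa using this
    have hcard : (s.erase l₀).card = n := by
      rw [Finset.card_erase_of_mem hl, hs]; omega
    have hPmz : ∀ lam ∈ s.erase l₀, Pm lam = 0 := ih _ hcard _ herase
    have hPz : ∀ lam ∈ s.erase l₀, P lam = 0 := by
      intro lam hlam
      have hne : lam - l₀ ≠ 0 := sub_ne_zero.mpr (Finset.ne_of_mem_erase hlam)
      have := hPmz lam hlam
      rw [hPm, opP_iter_apply] at this
      exact Lop_iter_inj hne m this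
    -- now the original sum reduces to the l₀-term
    have hl₀sum : ∀ t : ℝ, (P l₀).eval (t : ℂ) * Complex.exp (l₀ * t) = 0 := by
      intro t
      have := hsum t
      rw [← Finset.add_sum_erase s _ hl] at this
      rw [Finset.sum_eq_zero (fun lam hlam => by rw [hPz lam hlam]; simp)] at this
      simpa using this
    have : P l₀ = 0 := by
      apply Polynomial.eq_zero_of_infinite_isRoot
      refine (Set.infinite_range_of_injective Complex.ofReal_injective).mono ?_
      rintro _ ⟨t, rfl⟩
      have := hl₀sum t
      have hexp : Complex.exp (l₀ * t) ≠ 0 := Complex.exp_ne_zero _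
      exact (mul_eq_zero.mp this).resolve_right hexp
    exact this

lemma li : LinearIndependent ℂ
    (fun p : ℕ × ℂ => (fun t : ℝ => (t : ℂ) ^ p.1 * Complex.exp (p.2 * t))) := by
  rw [linearIndependent_iff']
  intro s g hsum i hi
  set S := s.image Prod.snd with hS
  set P : ℂ → ℂ[X] := fun l =>
    ∑ p ∈ s.filter (fun p => p.2 = l), C (g p) * X ^ p.1 with hP
  have hpt : ∀ t : ℝ, ∑ l ∈ S, (P l).eval (t : ℂ) * Complex.exp (l * t) = 0 := by
    intro t
    have h0 : ∑ p ∈ s, g p * ((t : ℂ) ^ p.1 * Complex.exp (p.2 * t)) = 0 := by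
      have := congrFun hsum t
      simpa [Finset.sum_apply] using this
    calc ∑ l ∈ S, (P l).eval (t : ℂ) * Complex.exp (l * t)
        = ∑ l ∈ S, ∑ p ∈ s.filter (fun p => p.2 = l),
            g p * ((t : ℂ) ^ p.1 * Complex.exp (p.2 * t)) := by
          refine Finset.sum_congr rfl fun l _ => ?_
          rw [hP, eval_finset_sum, Finset.sum_mul]
          refine Finset.sum_congr rfl fun p hp => ?_
          have : p.2 = l := (Finset.mem_filter.mp hp).2
          simp [this]
          ring
      _ = ∑ p ∈ s, g p * ((t : ℂ) ^ p.1 * Complex.exp (p.2 * t)) :=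
          Finset.sum_fiberwise_of_maps_to (fun p hp => Finset.mem_image_of_mem _ hp) _
      _ = 0 := h0
  have hPz : P i.2 = 0 := keyA S.card S rfl P hpt i.2 (Finset.mem_image_of_mem _ hi)
  have : (P i.2).coeff i.1 = g i := by
    rw [hP, finset_sum_coeff]
    have hsingle : ∑ b ∈ Finset.filter (fun p => p.2 = i.2) s,
        (C (g b) * X ^ b.1).coeff i.1 = (C (g i) * X ^ i.1).coeff i.1 := by
      refine Finset.sum_eq_single_of_mem i (Finset.mem_filter.mpr ⟨hi, rfl⟩) ?_
      intro p hp hne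
      rcases Finset.mem_filter.mp hp with ⟨_, hp2⟩
      have : p.1 ≠ i.1 := fun h1 => hne (Prod.ext h1 hp2)
      simp only [coeff_C_mul, coeff_X_pow]
      rw [if_neg (fun h => this h.symm), mul_zero]
    rw [hsingle, coeff_C_mul, coeff_X_pow, if_pos rfl, mul_one]
  rw [hPz] at this
  simpa using this.symm

abbrev BA := AddMonoidAlgebra ℂ (ℕ × ℂ)

def phi1 : Multiplicative (ℕ × ℂ) →* (ℝ → ℂ) where
  toFun p := fun t : ℝ => (t : ℂ) ^ (Multiplicative.toAdd p).1
    * Complex.exp ((Multiplicative.toAdd p).2 * t)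
  map_one' := by
    funext t
    simp
  map_mul' p q := by
    funext t
    simp only [toAdd_mul, Prod.fst_add, Prod.snd_add, Pi.mul_apply]
    rw [pow_add, add_mul, Complex.exp_add]
    ring

def phi2 : Multiplicative (ℕ × ℂ) →* (ℝ → ℂ) where
  toFun p := fun t : ℝ => Complex.exp (Complex.I * ((Multiplicative.toAdd p).2.im : ℂ) * t)
  map_one' := by
    funext t
    simp
  map_mul' p q := by
    funext t
    simp only [toAdd_mul, Prod.snd_add, Pi.mul_apply, Complex.add_im]
    rw [← Complex.exp_add]
    congr 1
    push_cast
    ring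

def piHom : BA →ₐ[ℂ] (ℝ → ℂ) := AddMonoidAlgebra.lift ℂ (ℝ → ℂ) (ℕ × ℂ) phi1
def psiHom : BA →ₐ[ℂ] (ℝ → ℂ) := AddMonoidAlgebra.lift ℂ (ℝ → ℂ) (ℕ × ℂ) phi2

lemma piHom_inj : Function.Injective piHom := by
  have h := li
  rw [LinearIndependent] at h
  have : ⇑piHom = ⇑(Finsupp.linearCombination ℂ
      (fun p : ℕ × ℂ => (fun t : ℝ => (t : ℂ) ^ p.1 * Complex.exp (p.2 * t)))) ∘
        AddMonoidAlgebra.coeff := by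
    funext x
    rw [Function.comp_apply, piHom, AddMonoidAlgebra.lift_apply, Finsupp.linearCombination_apply]
    rfl
  rw [this]
  exact h.comp AddMonoidAlgebra.coeff_injective

lemma piHom_range : piHom.range = Bohl := by
  apply le_antisymm
  · rintro _ ⟨x, rfl⟩
    show piHom x ∈ Bohl
    rw [piHom, AddMonoidAlgebra.lift_apply]
    refine Subalgebra.sum_mem _ fun p hp => ?_
    refine Subalgebra.smul_mem _ ?_ _
    exact Algebra.subset_adjoin ⟨p.1, p.2, rfl⟩
  · rw [Bohl]
    apply Algebra.adjoin_le
    rintro _ ⟨k, l, rfl⟩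
    refine ⟨AddMonoidAlgebra.single ((k, l) : ℕ × ℂ) 1, ?_⟩
    show piHom _ = _
    rw [piHom]
    rw [AddMonoidAlgebra.lift_single]
    rw [one_smul]
    rfl

def eAlg : BA ≃ₐ[ℂ] Bohl :=
  (AlgEquiv.ofInjective piHom piHom_inj).trans (Subalgebra.equivOfEq _ _ piHom_range)

lemma eAlg_coe (x : BA) : ((eAlg x : Bohl) : ℝ → ℂ) = piHom x := by
  rfl


end Aux

/-- There is a ring homomorphism `Ψ : B → (ℝ → ℂ)` mapping
`t ↦ c t^k e^{λ t}` to `t ↦ c e^{i Im(λ) t}`; it takes values in the generalized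
trigonometric polynomials and `Ψ 1 = 1`. -/
theorem exists_Psi :
    ∃ Ψ : Bohl →+* (ℝ → ℂ),
      (∀ (c l : ℂ) (k : ℕ)
        (h : (fun t : ℝ => c * (t : ℂ) ^ k * Complex.exp (l * t)) ∈ Bohl),
        Ψ ⟨_, h⟩ = fun t : ℝ => c * Complex.exp (Complex.I * (l.im : ℂ) * (t : ℂ))) ∧
      (∀ f : Bohl, IsTrigPoly (Ψ f)) ∧ Ψ 1 = 1 := by
  refine ⟨psiHom.toRingHom.comp (eAlg.symm.toAlgHom.toRingHom), ?_, ?_, ?_⟩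
  · intro c l k h
    set x : BA := AddMonoidAlgebra.single ((k, l) : ℕ × ℂ) c with hx
    have hex : eAlg x = ⟨_, h⟩ := by
      apply Subtype.ext
      rw [eAlg_coe]
      show piHom _ = _
      rw [piHom, hx, AddMonoidAlgebra.lift_single]
      funext t
      show c * ((t : ℂ) ^ k * Complex.exp (l * t)) = _
      ring
    show psiHom (eAlg.symm ⟨_, h⟩) = _
    rw [← hex, AlgEquiv.symm_apply_apply]
    rw [psiHom, hx, AddMonoidAlgebra.lift_single]
    funext t
    show c * Complex.exp (Complex.I * (l.im : ℂ) * t) = _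
    rfl
  · intro f
    set x : BA := eAlg.symm f with hx
    refine ⟨x.coeff.support.card, fun j => x.coeff (x.coeff.support.equivFin.symm j),
      fun j => ((x.coeff.support.equivFin.symm j : ℕ × ℂ)).2.im, ?_⟩
    show psiHom x = _
    rw [psiHom, AddMonoidAlgebra.lift_apply]
    funext t
    rw [Finsupp.sum, Finset.sum_apply]
    rw [← Finset.sum_attach x.coeff.support
      (fun p => (x.coeff p • phi2 (Multiplicative.ofAdd (p : ℕ × ℂ))) t)]
    rw [show x.coeff.support.attach = (Finset.univ : Finset {p // p ∈ x.coeff.support}) from rfl]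
    rw [← Equiv.sum_comp x.coeff.support.equivFin.symm]
    refine Finset.sum_congr rfl fun j _ => ?_
    show x.coeff _ * Complex.exp _ = _
    rfl
  · exact map_one _
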